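/- arXiv:2103.02500 — 2 statements merged into one kernel-verified Lean document; each statement's English description precedes it below -/
import Mathlib

section
/- Let p be a prime and k ≥ 1. Let L_k denote the set of all linear forms in the polynomial ring (ℤ/p)[x_1, …, x_k], i.e. all polynomials of the form a_1·x_1 + ⋯ + a_k·x_k with coefficients a_i ∈ ℤ/p (a set of p^k elements, including 0). Then the polynomial 1 − ∏_{l ∈ L_k} (1 + l) belongs to the ideal generated by x_1^{p−1}, x_2^{p−1}, …, x_k^{p−1}. -/
open Polynomial in
lemma prod_X_add_C_zmod (p : ℕ) [Fact p.Prime] :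
    ∏ c : ZMod p, (X + C c) = X ^ p - X := by
  have h := FiniteField.roots_X_pow_card_sub_X (ZMod p)
  rw [ZMod.card] at h
  have hd : (X ^ p - X : (ZMod p)[X]).natDegree = p :=
    FiniteField.X_pow_card_sub_X_natDegree_eq _ (Fact.out : p.Prime).one_lt
  have hm : (X ^ p - X : (ZMod p)[X]).Monic := by
    have h2 : (X ^ p - X : (ZMod p)[X]) = X ^ p + -X := by ring
    rw [h2]
    apply (monic_X_pow p).add_of_left
    refine lt_of_le_of_lt ((degree_neg (X : (ZMod p)[X])) ▸ degree_X_le) ?_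
    simp only [degree_X_pow]
    exact_mod_cast (Fact.out : p.Prime).one_lt
  have key := C_leadingCoeff_mul_prod_multiset_X_sub_C (p := (X ^ p - X : (ZMod p)[X]))
    (by rw [h, hd]; simp [ZMod.card])
  rw [hm.leadingCoeff, map_one, one_mul, h] at key
  have h1 : ∏ c : ZMod p, (X - C c) = (X ^ p - X : (ZMod p)[X]) := by
    rw [← key, Finset.prod_eq_multiset_prod]
  rw [← h1]
  exact Fintype.prod_equiv (Equiv.neg (ZMod p)) _ _ (fun c => by simp [sub_neg_eq_add])

open MvPolynomial in
lemma prod_add_smul_X (p : ℕ) [Fact p.Prime] {n : ℕ}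
    (u : MvPolynomial (Fin n) (ZMod p)) (i : Fin n) :
    ∏ c : ZMod p, (u + C c * X i) = u ^ p - u * X i ^ (p - 1) := by
  let K := FractionRing (MvPolynomial (Fin n) (ZMod p))
  have hinj : Function.Injective (algebraMap (MvPolynomial (Fin n) (ZMod p)) K) :=
    IsFractionRing.injective _ K
  apply hinj
  set φ := algebraMap (MvPolynomial (Fin n) (ZMod p)) K
  set ψ : ZMod p →+* K := φ.comp (MvPolynomial.C) with hψ
  set U := φ u
  set W := φ (X i) with hWdef
  have hW : W ≠ 0 := by
    simp only [hWdef, ne_eq, map_eq_zero_iff φ hinj]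
    exact MvPolynomial.X_ne_zero i
  set T := U / W with hT
  have hWT : W * T = U := by
    rw [hT, mul_div_assoc', mul_div_cancel_left₀ U hW]
  -- evaluate the univariate identity at T
  have h1 := congrArg (Polynomial.eval₂RingHom ψ T) (prod_X_add_C_zmod p)
  rw [map_prod] at h1
  simp only [Polynomial.coe_eval₂RingHom, Polynomial.eval₂_sub, Polynomial.eval₂_pow,
    Polynomial.eval₂_add, Polynomial.eval₂_X, Polynomial.eval₂_C] at h1
  -- h1 : ∏ c, (T + ψ c) = T ^ p - T
  have hp1 : 1 ≤ p := (Fact.out : p.Prime).one_le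
  have h2 : ∏ c : ZMod p, (U + ψ c * W) = U ^ p - U * W ^ (p - 1) := by
    have e1 : ∀ c : ZMod p, U + ψ c * W = W * (T + ψ c) := fun c => by
      rw [mul_add, hWT]; ring
    calc ∏ c : ZMod p, (U + ψ c * W) = ∏ c : ZMod p, (W * (T + ψ c)) := by
          exact Finset.prod_congr rfl fun c _ => e1 c
      _ = W ^ p * ∏ c : ZMod p, (T + ψ c) := by
          rw [Finset.prod_mul_distrib, Finset.prod_const, Finset.card_univ, ZMod.card]
      _ = W ^ p * (T ^ p - T) := by rw [h1]
      _ = (W * T) ^ p - W ^ (p - 1) * (W * T) := by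
          rw [mul_pow]
          have : W ^ p = W ^ (p - 1) * W := by
            rw [← pow_succ, Nat.sub_add_cancel hp1]
          rw [mul_sub, this]; ring
      _ = U ^ p - U * W ^ (p - 1) := by rw [hWT]; ring
  calc φ (∏ c : ZMod p, (u + C c * X i)) = ∏ c : ZMod p, (U + ψ c * W) := by
        rw [map_prod]; exact Finset.prod_congr rfl fun c _ => by
          simp [hψ, map_add, map_mul]
          rfl
    _ = U ^ p - U * W ^ (p - 1) := h2
    _ = φ (u ^ p - u * X i ^ (p - 1)) := by
        rw [map_sub, map_pow, map_mul, map_pow]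

open MvPolynomial in
lemma aux_main (p : ℕ) [Fact p.Prime] (n : ℕ) :
    (1 - ∏ a : Fin n → ZMod p,
        (1 + ∑ i : Fin n, MvPolynomial.C (a i) * MvPolynomial.X i)) ∈
      Ideal.span (Set.range fun i : Fin n =>
        (MvPolynomial.X i : MvPolynomial (Fin n) (ZMod p)) ^ (p - 1)) := by
  induction n with
  | zero => simp
  | succ n ih =>
    set I : Ideal (MvPolynomial (Fin (n + 1)) (ZMod p)) :=
      Ideal.span (Set.range fun i : Fin (n + 1) => (X i : MvPolynomial (Fin (n+1)) (ZMod p)) ^ (p - 1)) with hI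
    rw [← Ideal.Quotient.eq_zero_iff_mem, map_sub, map_one, sub_eq_zero]
    set mk := Ideal.Quotient.mk I
    -- reindex the product
    have hre : (∏ a : Fin (n+1) → ZMod p, (1 + ∑ i : Fin (n+1), C (a i) * X i))
        = ∏ a : Fin n → ZMod p, ∏ c : ZMod p,
            ((1 + ∑ i : Fin n, C (a i) * X i.succ) + C c * X 0) := by
      rw [← Fintype.prod_equiv (Fin.consEquiv (fun _ : Fin (n+1) => ZMod p)) _
        (fun q => 1 + ∑ i : Fin (n+1), C (q i) * X i) (fun q => rfl)]
      rw [Fintype.prod_prod_type]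
      rw [Finset.prod_comm]
      refine Finset.prod_congr rfl fun a _ => Finset.prod_congr rfl fun c _ => ?_
      simp only [Fin.consEquiv, Equiv.coe_fn_mk]
      rw [Fin.sum_univ_succ]
      simp only [Fin.cons_zero, Fin.cons_succ]
      ring
    have hkey : ∀ a : Fin n → ZMod p,
        mk (∏ c : ZMod p, ((1 + ∑ i : Fin n, C (a i) * X i.succ) + C c * X 0))
          = (mk (1 + ∑ i : Fin n, C (a i) * X i.succ)) ^ p := by
      intro a
      rw [prod_add_smul_X, map_sub, map_pow, map_mul]
      have hX0 : mk ((X 0 : MvPolynomial (Fin (n+1)) (ZMod p)) ^ (p - 1)) = 0 := by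
        rw [Ideal.Quotient.eq_zero_iff_mem]
        exact Ideal.subset_span ⟨0, rfl⟩
      rw [hX0, mul_zero, sub_zero]
    have hprod : mk (∏ a : Fin (n+1) → ZMod p, (1 + ∑ i : Fin (n+1), C (a i) * X i))
        = (mk (∏ a : Fin n → ZMod p, (1 + ∑ i : Fin n, C (a i) * X i.succ))) ^ p := by
      rw [hre, map_prod]
      rw [Finset.prod_congr rfl (fun a _ => hkey a), Finset.prod_pow, ← map_prod]
    rw [hprod]
    -- relate to renamed product in n variables
    have hren : (∏ a : Fin n → ZMod p, (1 + ∑ i : Fin n, C (a i) * X i.succ))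
        = rename Fin.succ (∏ a : Fin n → ZMod p, (1 + ∑ i : Fin n, C (a i) * X i)) := by
      rw [map_prod]
      refine Finset.prod_congr rfl fun a _ => ?_
      rw [map_add, map_one, map_sum]
      simp [rename_C, rename_X]
    have hmem : (1 : MvPolynomial (Fin (n+1)) (ZMod p))
        - rename Fin.succ (∏ a : Fin n → ZMod p, (1 + ∑ i : Fin n, C (a i) * X i)) ∈ I := by
      have h3 := Ideal.mem_map_of_mem (rename (σ := Fin n) (τ := Fin (n+1))
        (R := ZMod p) Fin.succ).toRingHom ih
      rw [Ideal.map_span] at h3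
      have h4 : (rename (σ := Fin n) (τ := Fin (n+1)) (R := ZMod p) Fin.succ).toRingHom ''
          (Set.range fun i : Fin n => (X i : MvPolynomial (Fin n) (ZMod p)) ^ (p - 1))
          ⊆ Set.range fun i : Fin (n+1) => (X i : MvPolynomial (Fin (n+1)) (ZMod p)) ^ (p - 1) := by
        rintro _ ⟨_, ⟨i, rfl⟩, rfl⟩
        exact ⟨i.succ, by simp [rename_X]⟩
      have h5 := Ideal.span_mono h4 h3
      simpa using h5
    have : mk (rename Fin.succ (∏ a : Fin n → ZMod p, (1 + ∑ i : Fin n, C (a i) * X i))) = 1 := by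
      have := (Ideal.Quotient.eq_zero_iff_mem).mpr hmem
      rw [map_sub, map_one, sub_eq_zero] at this
      exact this.symm
    rw [hren, this, one_pow]

/-- For a prime `p` and `k ≥ 1`, in `(ℤ/p)[x_1, …, x_k]`, the polynomial
`1 − ∏_{l ∈ L_k} (1 + l)` (the product over all linear forms `l`) lies in the ideal
generated by `x_1^{p−1}, …, x_k^{p−1}`. -/
theorem one_sub_prod_linear_forms_mem_ideal (p k : ℕ) [Fact p.Prime] (hk : 1 ≤ k) :
    (1 - ∏ a : Fin k → ZMod p,
        (1 + ∑ i : Fin k, MvPolynomial.C (a i) * MvPolynomial.X i)) ∈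
      Ideal.span (Set.range fun i : Fin k =>
        (MvPolynomial.X i : MvPolynomial (Fin k) (ZMod p)) ^ (p - 1)) := by
  exact aux_main p k
end

section
/- Let p be a prime and k ≥ 1. Let L_k denote the set of all linear forms in the polynomial ring (ℤ/p)[x_1, …, x_k], i.e. all polynomials of the form a_1·x_1 + ⋯ + a_k·x_k with coefficients a_i ∈ ℤ/p. Then the polynomial ∏_{l ∈ L_k} (1 + l) is a sum of monomials whose total degrees are all multiples of p − 1; that is, every homogeneous component of ∏_{l ∈ L_k} (1 + l) in a degree not divisible by p − 1 vanishes. -/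
open MvPolynomial

lemma coeff_aeval_scale {p k : ℕ} [Fact p.Prime] (c : ZMod p) (m : Fin k →₀ ℕ)
    (q : MvPolynomial (Fin k) (ZMod p)) :
    coeff m (aeval (fun i => C c * X i) q) = c ^ m.degree * coeff m q := by
  induction q using MvPolynomial.induction_on' with
  | add q r hq hr => simp only [map_add, coeff_add, hq, hr, mul_add]
  | monomial u a =>
      have key : (aeval (fun i => C c * X i)) (monomial u a)
          = C (c ^ u.degree) * monomial u a := by
        rw [aeval_monomial]
        have hC : (∏ x ∈ u.support, (C c : MvPolynomial (Fin k) (ZMod p)) ^ u x)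
            = C (c ^ u.degree) := by
          rw [show (∏ x ∈ u.support, (C c : MvPolynomial (Fin k) (ZMod p)) ^ u x)
              = ∏ x ∈ u.support, C (c ^ u x) by simp [map_pow]]
          rw [← map_prod, Finset.prod_pow_eq_pow_sum]
          rfl
        have : (u.prod fun i e => (C c * X i) ^ e)
            = C (c ^ u.degree) * u.prod fun i e => (X i : MvPolynomial (Fin k) (ZMod p)) ^ e := by
          rw [Finsupp.prod, Finsupp.prod]
          rw [Finset.prod_congr rfl (fun i _ => mul_pow (C c) (X i) (u i))]
          rw [Finset.prod_mul_distrib, hC]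
        rw [this, monomial_eq, algebraMap_eq]
        ring
      rw [key, coeff_C_mul]
      simp only [coeff_monomial]
      split_ifs with h
      · subst h; ring
      · ring

/-- For a prime `p` and `k ≥ 1`, every homogeneous component of
`∏_{l ∈ L_k} (1 + l)` (product over all linear forms in `(ℤ/p)[x_1,…,x_k]`) in a degree
not divisible by `p − 1` vanishes. -/
theorem homogeneousComponent_prod_linear_forms_eq_zero
    (p k : ℕ) [Fact p.Prime] (hk : 1 ≤ k) (d : ℕ) (hd : ¬ (p - 1) ∣ d) :
    MvPolynomial.homogeneousComponent d
      (∏ a : Fin k → ZMod p,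
        (1 + ∑ i : Fin k, MvPolynomial.C (a i) * MvPolynomial.X i)) = 0 := by
  obtain ⟨g, hg⟩ := IsCyclic.exists_generator (α := (ZMod p)ˣ)
  have horder : orderOf g = p - 1 := by
    rw [orderOf_eq_card_of_forall_mem_zpowers hg, Nat.card_eq_fintype_card, ZMod.card_units]
  set c : ZMod p := (g : ZMod p) with hc_def
  have hc0 : c ≠ 0 := g.ne_zero
  have hcd : c ^ d ≠ 1 := by
    intro h
    apply hd
    rw [← horder]
    rw [orderOf_dvd_iff_pow_eq_one]
    ext
    push_cast
    exact h
  set P : MvPolynomial (Fin k) (ZMod p) :=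
    ∏ a : Fin k → ZMod p, (1 + ∑ i : Fin k, C (a i) * X i) with hP
  have hSP : aeval (fun i => C c * X i) P = P := by
    rw [hP, map_prod]
    apply Fintype.prod_bijective (fun a : Fin k → ZMod p => fun i => c * a i)
    · constructor
      · intro a b hab
        funext i
        exact mul_left_cancel₀ hc0 (congrFun hab i)
      · intro b
        exact ⟨fun i => c⁻¹ * b i, by funext i; field_simp⟩
    · intro a
      rw [map_add, map_one, map_sum]
      congr 1
      apply Finset.sum_congr rfl
      intro i _
      rw [map_mul, aeval_C, aeval_X]
      simp only [algebraMap_eq]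
      rw [← mul_assoc, ← map_mul, mul_comm (a i) c]
  rw [MvPolynomial.ext_iff]
  intro m
  rw [coeff_homogeneousComponent, coeff_zero]
  split_ifs with hm
  · have h1 : coeff m P = c ^ d * coeff m P := by
      conv_lhs => rw [← hSP]
      rw [coeff_aeval_scale, hm]
    have h2 : (c ^ d - 1) * coeff m P = 0 := by
      rw [sub_mul, one_mul, ← h1, sub_self]
    rcases mul_eq_zero.mp h2 with h | h
    · exact absurd (sub_eq_zero.mp h) hcd
    · exact h
  · rfl
end
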